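/- Define the graph G_k with vertex set [k] ∪ C([k],2), where C([k],2) is the set of 2-element subsets of [k] = {1,…,k}, and edges connecting each pair-vertex {i,j} to the vertices i and j. For every partition of [k] into three nonempty parts P_1, P_2, P_3, the set Ω consisting of all pair-vertices {i,j} with i and j in different parts is a potential maximal clique of G_k. -/

import Mathlib

/-- The graph `H` with vertices of `Ω` made isolated (edges within `V \ Ω`). -/
def restrict {V : Type*} (H : SimpleGraph V) (Ω : Set V) : SimpleGraph V where
  Adj a b := H.Adj a b ∧ a ∉ Ω ∧ b ∉ Ω
  symm := ⟨fun _ _ ⟨h, ha, hb⟩ => ⟨h.symm, hb, ha⟩⟩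
  loopless := ⟨fun a h => H.irrefl h.1⟩

/-- `C` is the vertex set of a connected component of `H \ Ω`. -/
def IsCompOf {V : Type*} (H : SimpleGraph V) (Ω C : Set V) : Prop :=
  ∃ a, a ∉ Ω ∧ C = {b | b ∉ Ω ∧ (restrict H Ω).Reachable a b}

/-- Neighborhood of a vertex set: vertices outside `C` adjacent to some vertex of `C`. -/
def nbhd {V : Type*} (H : SimpleGraph V) (C : Set V) : Set V :=
  {w | w ∉ C ∧ ∃ c ∈ C, H.Adj w c}

/-- `Ω` is a potential maximal clique of `H`. -/
def IsPMC {V : Type*} (H : SimpleGraph V) (Ω : Set V) : Prop :=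
  (∀ C, IsCompOf H Ω C → nbhd H C ≠ Ω) ∧
  (∀ u ∈ Ω, ∀ v ∈ Ω, u ≠ v →
    H.Adj u v ∨ ∃ C, IsCompOf H Ω C ∧ u ∈ nbhd H C ∧ v ∈ nbhd H C)

/-- A PMC is free if every vertex of `Ω` has a neighbor outside `Ω`. -/
def IsFree {V : Type*} (H : SimpleGraph V) (Ω : Set V) : Prop :=
  ∀ v ∈ Ω, ∃ w, w ∉ Ω ∧ H.Adj v w

/-- Vertices of `G_k`: `[k]` together with the 2-element subsets of `[k]`. -/
abbrev GkV (k : ℕ) := Fin k ⊕ {S : Finset (Fin k) // S.card = 2}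

/-- The incidence graph of 2-element subsets of `[k]` over `[k]`. -/
def Gk (k : ℕ) : SimpleGraph (GkV k) where
  Adj a b := match a, b with
    | .inl i, .inr S => i ∈ S.val
    | .inr S, .inl i => i ∈ S.val
    | _, _ => False
  symm := ⟨by rintro (i|S) (j|T) h <;> simp_all⟩
  loopless := ⟨by rintro (i|S) h <;> simp_all⟩

/-- `{P1, P2, P3}` is a partition of `[k]` into three nonempty parts. -/
def IsTripartition {k : ℕ} (P1 P2 P3 : Set (Fin k)) : Prop :=
  P1.Nonempty ∧ P2.Nonempty ∧ P3.Nonempty ∧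
  Disjoint P1 P2 ∧ Disjoint P1 P3 ∧ Disjoint P2 P3 ∧ P1 ∪ P2 ∪ P3 = Set.univ

/-- The set of pair-vertices `{i, j}` with `i` and `j` in different parts of `{P1, P2, P3}`. -/
def Omega3 {k : ℕ} (P1 P2 P3 : Set (Fin k)) : Set (GkV k) :=
  {x | ∃ S : {S : Finset (Fin k) // S.card = 2}, x = Sum.inr S ∧
    ∃ i ∈ S.val, ∃ j ∈ S.val, i ≠ j ∧
      ¬((i ∈ P1 ∧ j ∈ P1) ∨ (i ∈ P2 ∧ j ∈ P2) ∨ (i ∈ P3 ∧ j ∈ P3))}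

namespace Stmt5Aux

variable {k : ℕ} (P1 P2 P3 : Set (Fin k))

/-- The three parts as a function on `Fin 3`. -/
def Pv (t : Fin 3) : Set (Fin k) := if t.val = 0 then P1 else if t.val = 1 then P2 else P3

@[simp] lemma pv0 : Pv P1 P2 P3 0 = P1 := by simp [Pv]
@[simp] lemma pv1 : Pv P1 P2 P3 1 = P2 := by simp [Pv]
@[simp] lemma pv2 : Pv P1 P2 P3 2 = P3 := by simp [Pv]

/-- Candidate component: vertices "inside" part `t`. -/
def compSet (t : Fin 3) : Set (GkV k) :=
  {x | Sum.elim (fun i => i ∈ Pv P1 P2 P3 t)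
      (fun S : {S : Finset (Fin k) // S.card = 2} => ∀ m ∈ S.1, m ∈ Pv P1 P2 P3 t) x}

@[simp] lemma compSet_inl {t i} : Sum.inl i ∈ compSet P1 P2 P3 t ↔ i ∈ Pv P1 P2 P3 t := Iff.rfl
@[simp] lemma compSet_inr {t} {S : {S : Finset (Fin k) // S.card = 2}} :
    Sum.inr S ∈ compSet P1 P2 P3 t ↔ ∀ m ∈ S.1, m ∈ Pv P1 P2 P3 t := Iff.rfl

variable {P1 P2 P3} (hpart : IsTripartition P1 P2 P3)

include hpart

lemma pv_mem (i : Fin k) : ∃ t, i ∈ Pv P1 P2 P3 t := by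
  have h := hpart.2.2.2.2.2.2
  have hi : i ∈ P1 ∪ P2 ∪ P3 := h ▸ Set.mem_univ i
  rcases hi with (h1 | h2) | h3
  · exact ⟨0, by simpa using h1⟩
  · exact ⟨1, by simpa using h2⟩
  · exact ⟨2, by simpa using h3⟩

lemma pv_disj {t s : Fin 3} (hts : t ≠ s) :
    Disjoint (Pv P1 P2 P3 t) (Pv P1 P2 P3 s) := by
  obtain ⟨-, -, -, d12, d13, d23, -⟩ := hpart
  fin_cases t <;> fin_cases s <;> simp_all [Pv] <;>
    first
      | exact d12 | exact d13 | exact d23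
      | exact d12.symm | exact d13.symm | exact d23.symm

lemma part_eq {i : Fin k} {t s : Fin 3} (ht : i ∈ Pv P1 P2 P3 t) (hs : i ∈ Pv P1 P2 P3 s) :
    t = s := by
  by_contra h
  exact Set.disjoint_left.mp (pv_disj hpart h) ht hs

lemma pv_nonempty (t : Fin 3) : (Pv P1 P2 P3 t).Nonempty := by
  fin_cases t
  · simpa using hpart.1
  · simpa using hpart.2.1
  · simpa using hpart.2.2.1

lemma omega_inr_iff (S : {S : Finset (Fin k) // S.card = 2}) :
    Sum.inr S ∈ Omega3 P1 P2 P3 ↔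
      ∃ i ∈ S.1, ∃ j ∈ S.1, ∃ t s : Fin 3, t ≠ s ∧ i ∈ Pv P1 P2 P3 t ∧ j ∈ Pv P1 P2 P3 s := by
  constructor
  · rintro ⟨S', hS', i, hi, j, hj, hij, hno⟩
    obtain rfl := Sum.inr_injective hS'.symm
    obtain ⟨t, ht⟩ := pv_mem hpart i
    obtain ⟨s, hs⟩ := pv_mem hpart j
    refine ⟨i, hi, j, hj, t, s, ?_, ht, hs⟩
    rintro rfl
    apply hno
    fin_cases t
    · exact Or.inl ⟨by simpa [Pv] using ht, by simpa [Pv] using hs⟩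
    · exact Or.inr (Or.inl ⟨by simpa [Pv] using ht, by simpa [Pv] using hs⟩)
    · exact Or.inr (Or.inr ⟨by simpa [Pv] using ht, by simpa [Pv] using hs⟩)
  · rintro ⟨i, hi, j, hj, t, s, hts, hit, hjs⟩
    refine ⟨S, rfl, i, hi, j, hj, ?_, ?_⟩
    · rintro rfl
      exact Set.disjoint_left.mp (pv_disj hpart hts) hit hjs
    · rintro (⟨h1, h2⟩ | ⟨h1, h2⟩ | ⟨h1, h2⟩)
      · exact hts ((part_eq hpart hit (show i ∈ Pv P1 P2 P3 0 by simpa using h1)).trans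
          (part_eq hpart (show j ∈ Pv P1 P2 P3 0 by simpa using h2) hjs))
      · exact hts ((part_eq hpart hit (show i ∈ Pv P1 P2 P3 1 by simpa using h1)).trans
          (part_eq hpart (show j ∈ Pv P1 P2 P3 1 by simpa using h2) hjs))
      · exact hts ((part_eq hpart hit (show i ∈ Pv P1 P2 P3 2 by simpa using h1)).trans
          (part_eq hpart (show j ∈ Pv P1 P2 P3 2 by simpa using h2) hjs))

omit hpart in
lemma inl_not_omega {i : Fin k} : Sum.inl i ∉ Omega3 P1 P2 P3 := by
  rintro ⟨S, h, -⟩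
  exact Sum.inl_ne_inr h

lemma compSet_not_omega {t : Fin 3} {x : GkV k} (hx : x ∈ compSet P1 P2 P3 t) :
    x ∉ Omega3 P1 P2 P3 := by
  cases x with
  | inl i => exact inl_not_omega
  | inr S =>
    intro hΩ
    obtain ⟨i, hi, j, hj, t1, s1, hts, hit, hjs⟩ := (omega_inr_iff hpart S).mp hΩ
    exact hts ((part_eq hpart hit (hx i hi)).trans (part_eq hpart hjs (hx j hj)).symm)

lemma step {t : Fin 3} {x y : GkV k} (hx : x ∈ compSet P1 P2 P3 t)
    (h : (restrict (Gk k) (Omega3 P1 P2 P3)).Adj x y) : y ∈ compSet P1 P2 P3 t := by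
  obtain ⟨hadj, hxΩ, hyΩ⟩ := h
  cases x with
  | inl i =>
    cases y with
    | inl j => exact hadj.elim
    | inr S =>
      intro j hj
      obtain ⟨s, hs⟩ := pv_mem hpart j
      have hts : t = s := by
        by_contra hne
        exact hyΩ ((omega_inr_iff hpart S).mpr ⟨i, hadj, j, hj, t, s, hne, hx, hs⟩)
      exact hts ▸ hs
  | inr S =>
    cases y with
    | inl i => exact hx i hadj
    | inr T => exact hadj.elim

lemma walk_closure {t : Fin 3} {x y : GkV k}
    (w : (restrict (Gk k) (Omega3 P1 P2 P3)).Walk x y)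
    (hx : x ∈ compSet P1 P2 P3 t) : y ∈ compSet P1 P2 P3 t := by
  induction w with
  | nil => exact hx
  | cons h p ih => exact ih (step hpart hx h)

lemma pair_not_omega {t : Fin 3} {i j : Fin k} (hi : i ∈ Pv P1 P2 P3 t)
    (hj : j ∈ Pv P1 P2 P3 t) (hne : i ≠ j) :
    Sum.inr (⟨{i, j}, Finset.card_pair hne⟩ : {S : Finset (Fin k) // S.card = 2}) ∉
      Omega3 P1 P2 P3 := by
  refine compSet_not_omega hpart (t := t) ?_
  intro m hm
  rcases Finset.mem_insert.mp hm with rfl | hm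
  · exact hi
  · rw [Finset.mem_singleton.mp hm]; exact hj

lemma reach_base {t : Fin 3} {p : Fin k} (hp : p ∈ Pv P1 P2 P3 t) :
    ∀ {x : GkV k}, x ∈ compSet P1 P2 P3 t →
      (restrict (Gk k) (Omega3 P1 P2 P3)).Reachable (Sum.inl p) x := by
  have inlreach : ∀ i, i ∈ Pv P1 P2 P3 t →
      (restrict (Gk k) (Omega3 P1 P2 P3)).Reachable (Sum.inl p) (Sum.inl i) := by
    intro i hi
    by_cases hpi : p = i
    · subst hpi; exact SimpleGraph.Reachable.refl _
    · have hSΩ := pair_not_omega hpart hp hi hpi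
      have a1 : (restrict (Gk k) (Omega3 P1 P2 P3)).Adj (Sum.inl p)
          (Sum.inr ⟨{p, i}, Finset.card_pair hpi⟩) :=
        ⟨Finset.mem_insert_self p {i}, inl_not_omega, hSΩ⟩
      have a2 : (restrict (Gk k) (Omega3 P1 P2 P3)).Adj
          (Sum.inr ⟨{p, i}, Finset.card_pair hpi⟩) (Sum.inl i) :=
        ⟨Finset.mem_insert_of_mem (Finset.mem_singleton_self i), hSΩ, inl_not_omega⟩
      exact a1.reachable.trans a2.reachable
  intro x hx
  cases x with
  | inl i => exact inlreach i hx
  | inr S =>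
    obtain ⟨i, j, hij, hS⟩ := Finset.card_eq_two.mp S.2
    have hiS : i ∈ S.1 := by rw [hS]; exact Finset.mem_insert_self _ _
    have hSΩ : Sum.inr S ∉ Omega3 P1 P2 P3 := compSet_not_omega hpart hx
    exact (inlreach i (hx i hiS)).trans
      (SimpleGraph.Adj.reachable ⟨hiS, inl_not_omega, hSΩ⟩)

lemma comp_eq {t : Fin 3} {p : Fin k} (hp : p ∈ Pv P1 P2 P3 t) {a : GkV k}
    (ha : a ∈ compSet P1 P2 P3 t) :
    {b | b ∉ Omega3 P1 P2 P3 ∧ (restrict (Gk k) (Omega3 P1 P2 P3)).Reachable a b} =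
      compSet P1 P2 P3 t := by
  ext b
  constructor
  · rintro ⟨-, hr⟩
    obtain ⟨w⟩ := hr
    exact walk_closure hpart w ha
  · intro hb
    exact ⟨compSet_not_omega hpart hb,
      (reach_base hpart hp ha).symm.trans (reach_base hpart hp hb)⟩

lemma isComp (t : Fin 3) : IsCompOf (Gk k) (Omega3 P1 P2 P3) (compSet P1 P2 P3 t) := by
  obtain ⟨p, hp⟩ := pv_nonempty hpart t
  exact ⟨Sum.inl p, inl_not_omega, (comp_eq hpart hp hp).symm⟩

lemma classify {C : Set (GkV k)} (hC : IsCompOf (Gk k) (Omega3 P1 P2 P3) C) :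
    ∃ t, C = compSet P1 P2 P3 t := by
  obtain ⟨a, haΩ, rfl⟩ := hC
  have hat : ∃ t, a ∈ compSet P1 P2 P3 t := by
    cases a with
    | inl i => exact (pv_mem hpart i)
    | inr S =>
      obtain ⟨i, j, hij, hS⟩ := Finset.card_eq_two.mp S.2
      have hiS : i ∈ S.1 := by rw [hS]; exact Finset.mem_insert_self _ _
      have hjS : j ∈ S.1 := by rw [hS]; exact Finset.mem_insert_of_mem (Finset.mem_singleton_self j)
      obtain ⟨t, ht⟩ := pv_mem hpart i
      obtain ⟨s, hs⟩ := pv_mem hpart j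
      have hts : t = s := by
        by_contra h
        exact haΩ ((omega_inr_iff hpart S).mpr ⟨i, hiS, j, hjS, t, s, h, ht, hs⟩)
      refine ⟨t, fun m hm => ?_⟩
      rw [hS] at hm
      rcases Finset.mem_insert.mp hm with rfl | hm
      · exact ht
      · rw [Finset.mem_singleton.mp hm]; exact hts ▸ hs
  obtain ⟨t, hat⟩ := hat
  obtain ⟨p, hp⟩ := pv_nonempty hpart t
  exact ⟨t, comp_eq hpart hp hat⟩

end Stmt5Aux

open Stmt5Aux in
theorem stmt5 (k : ℕ) (P1 P2 P3 : Set (Fin k)) (hpart : IsTripartition P1 P2 P3) :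
    IsPMC (Gk k) (Omega3 P1 P2 P3) := by
  constructor
  · intro C hC
    obtain ⟨t, rfl⟩ := classify hpart hC
    have h3 : ∀ t : Fin 3, ∃ s r : Fin 3, s ≠ t ∧ r ≠ t ∧ s ≠ r := by decide
    obtain ⟨s, r, hst, hrt, hsr⟩ := h3 t
    obtain ⟨q, hq⟩ := pv_nonempty hpart s
    obtain ⟨w, hw⟩ := pv_nonempty hpart r
    have hqw : q ≠ w := by
      rintro rfl
      exact Set.disjoint_left.mp (pv_disj hpart hsr) hq hw
    have hSΩ : Sum.inr (⟨{q, w}, Finset.card_pair hqw⟩ : {S : Finset (Fin k) // S.card = 2}) ∈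
        Omega3 P1 P2 P3 :=
      (omega_inr_iff hpart _).mpr ⟨q, Finset.mem_insert_self q {w}, w,
        Finset.mem_insert_of_mem (Finset.mem_singleton_self w), s, r, hsr, hq, hw⟩
    intro heq
    have hmem : Sum.inr (⟨{q, w}, Finset.card_pair hqw⟩ : {S : Finset (Fin k) // S.card = 2}) ∈
        nbhd (Gk k) (compSet P1 P2 P3 t) := heq ▸ hSΩ
    obtain ⟨-, c, hc, hadj⟩ := hmem
    cases c with
    | inr T => exact hadj.elim
    | inl m =>
      have hm : m ∈ ({q, w} : Finset (Fin k)) := hadj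
      rcases Finset.mem_insert.mp hm with rfl | hm
      · exact hst (part_eq hpart hq hc)
      · rw [Finset.mem_singleton] at hm
        subst hm
        exact hrt (part_eq hpart hw hc)
  · intro u hu v hv huv
    obtain ⟨S, rfl, -⟩ := id hu
    obtain ⟨T, rfl, -⟩ := id hv
    obtain ⟨i1, hi1, i2, hi2, t1, t2, ht, hp1, hp2⟩ := (omega_inr_iff hpart S).mp hu
    obtain ⟨j1, hj1, j2, hj2, s1, s2, hs, hq1, hq2⟩ := (omega_inr_iff hpart T).mp hv
    have hcom : ∀ a b c d : Fin 3, a ≠ b → c ≠ d → a = c ∨ a = d ∨ b = c ∨ b = d := by decide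
    have hcommon : ∃ t, (∃ i ∈ S.1, i ∈ Pv P1 P2 P3 t) ∧ ∃ j ∈ T.1, j ∈ Pv P1 P2 P3 t := by
      rcases hcom t1 t2 s1 s2 ht hs with h | h | h | h
      · exact ⟨t1, ⟨i1, hi1, hp1⟩, ⟨j1, hj1, by rw [h]; exact hq1⟩⟩
      · exact ⟨t1, ⟨i1, hi1, hp1⟩, ⟨j2, hj2, by rw [h]; exact hq2⟩⟩
      · exact ⟨t2, ⟨i2, hi2, hp2⟩, ⟨j1, hj1, by rw [h]; exact hq1⟩⟩
      · exact ⟨t2, ⟨i2, hi2, hp2⟩, ⟨j2, hj2, by rw [h]; exact hq2⟩⟩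
    obtain ⟨t, ⟨iS, hiS, hiP⟩, ⟨jT, hjT, hjP⟩⟩ := hcommon
    refine Or.inr ⟨compSet P1 P2 P3 t, isComp hpart t, ?_, ?_⟩
    · exact ⟨fun h => compSet_not_omega hpart h hu, Sum.inl iS, hiP, hiS⟩
    · exact ⟨fun h => compSet_not_omega hpart h hv, Sum.inl jT, hjP, hjT⟩
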